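/- For every integer L ≥ 2 and integers r, s with 0 ≤ s ≤ ⌊L/2⌋ - 1 and 0 ≤ r ≤ s, there exists a bijection between {η ∈ {0,1}^L : |η| = s, ε₁(η) = r} and {η ∈ {0,1}^L : |η| = s+1, ε₁(η) = r+1} which preserves the energy E(η) = ∑_{j=1}^{L-1} j·[η_j = 0 and η_{j+1} = 1]. -/

import Mathlib

/-- Extension of a finite binary sequence to `ℕ` by `false`. -/
def ext (L : ℕ) (η : Fin L → Bool) (j : ℕ) : Bool :=
  if h : j < L then η ⟨j, h⟩ else false

/-- The energy `E(η) = ∑_{j=1}^{L-1} j · [η_j = 0 ∧ η_{j+1} = 1]` (1-based). -/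
def energy (L : ℕ) (η : Fin L → Bool) : ℕ :=
  ∑ j ∈ Finset.range (L - 1),
    if ext L η j = false ∧ ext L η (j + 1) = true then j + 1 else 0

/-- The number of ones in the binary sequence. -/
def ones (L : ℕ) (η : Fin L → Bool) : ℕ :=
  ∑ i : Fin L, if η i = true then 1 else 0

/-- The path encoding: `S_0 = 0`, `S_i = S_{i-1} + 1 - 2 η_i`. -/
def pathS (L : ℕ) (η : Fin L → Bool) (i : ℕ) : ℤ :=
  ∑ j ∈ Finset.range i, (1 - 2 * (if ext L η j = true then 1 else 0))

/-- `ε₁(η) = - min_{0 ≤ i ≤ L} S_i(η)`. -/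
def eps1 (L : ℕ) (η : Fin L → Bool) : ℤ :=
  - (Finset.range (L + 1)).inf' ⟨0, Finset.mem_range.mpr (Nat.succ_pos L)⟩ (pathS L η)

namespace Stmt9

/-- Flip the bit at (0-based) position `k`. -/
def flipAt (L : ℕ) (η : Fin L → Bool) (k : ℕ) : Fin L → Bool :=
  fun i => if (i : ℕ) = k then !(η i) else η i

lemma ext_flipAt (L : ℕ) (η : Fin L → Bool) (k : ℕ) (hk : k < L) (j : ℕ) :
    ext L (flipAt L η k) j = if j = k then !(ext L η j) else ext L η j := by
  unfold ext flipAt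
  by_cases hj : j < L
  · simp [hj]
  · have : j ≠ k := by omega
    simp [hj, this]

lemma flipAt_flipAt (L : ℕ) (η : Fin L → Bool) (k : ℕ) :
    flipAt L (flipAt L η k) k = η := by
  funext i; unfold flipAt; by_cases h : (i : ℕ) = k <;> simp [h]

lemma ext_true_lt (L : ℕ) (η : Fin L → Bool) (j : ℕ) (h : ext L η j = true) : j < L := by
  by_contra hj
  simp [ext, hj] at h

lemma ones_eq_sum_range (L : ℕ) (η : Fin L → Bool) :
    ones L η = ∑ j ∈ Finset.range L, if ext L η j = true then 1 else 0 := by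
  rw [ones, Finset.sum_range]
  apply Finset.sum_congr rfl
  intro i _
  simp [ext, i.isLt]

lemma pathS_succ (L : ℕ) (η : Fin L → Bool) (i : ℕ) :
    pathS L η (i + 1) = pathS L η i + (1 - 2 * (if ext L η i = true then 1 else 0)) :=
  Finset.sum_range_succ _ _

lemma pathS_zero (L : ℕ) (η : Fin L → Bool) : pathS L η 0 = 0 := by
  simp [pathS]

lemma pathS_last (L : ℕ) (η : Fin L → Bool) :
    pathS L η L = (L : ℤ) - 2 * ones L η := by
  have h : (ones L η : ℤ) = ∑ j ∈ Finset.range L, (if ext L η j = true then 1 else 0 : ℤ) := by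
    rw [ones_eq_sum_range]
    push_cast [apply_ite (Nat.cast : ℕ → ℤ)]
    rfl
  rw [pathS, h, Finset.sum_sub_distrib, ← Finset.mul_sum]
  simp

lemma ones_flip_false (L : ℕ) (η : Fin L → Bool) (k : ℕ) (hk : k < L)
    (h : ext L η k = false) :
    ones L (flipAt L η k) = ones L η + 1 := by
  rw [ones_eq_sum_range, ones_eq_sum_range]
  have : ∀ j ∈ Finset.range L,
      (if ext L (flipAt L η k) j = true then 1 else 0)
        = (if ext L η j = true then 1 else 0) + (if j = k then 1 else 0) := by
    intro j _
    rw [ext_flipAt L η k hk j]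
    by_cases hj : j = k
    · subst hj; simp [h]
    · simp [hj]
  rw [Finset.sum_congr rfl this, Finset.sum_add_distrib, Finset.sum_ite_eq' (Finset.range L) k]
  simp [Finset.mem_range.mpr hk]

lemma ones_flip_true (L : ℕ) (η : Fin L → Bool) (k : ℕ) (hk : k < L)
    (h : ext L η k = true) :
    ones L η = ones L (flipAt L η k) + 1 := by
  have h' : ext L (flipAt L η k) k = false := by
    rw [ext_flipAt L η k hk k]; simp [h]
  have := ones_flip_false L (flipAt L η k) k hk h'
  rw [flipAt_flipAt] at this
  omega

lemma pathS_flip (L : ℕ) (η : Fin L → Bool) (k : ℕ) (hk : k < L) (i : ℕ) :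
    pathS L (flipAt L η k) i
      = pathS L η i + (if k < i then (if ext L η k = true then 2 else -2) else 0) := by
  unfold pathS
  have : ∀ j ∈ Finset.range i,
      (1 - 2 * (if ext L (flipAt L η k) j = true then 1 else 0) : ℤ)
        = (1 - 2 * (if ext L η j = true then 1 else 0))
          + (if j = k then (if ext L η k = true then 2 else -2) else 0) := by
    intro j _
    rw [ext_flipAt L η k hk j]
    by_cases hj : j = k
    · subst hj
      cases hb : ext L η j <;> simp [hb] <;> ring
    · simp [hj]
  rw [Finset.sum_congr rfl this, Finset.sum_add_distrib, Finset.sum_ite_eq' (Finset.range i) k]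
  simp [Finset.mem_range]

lemma energy_flip (L : ℕ) (η : Fin L → Bool) (k : ℕ) (hk : k < L)
    (h1 : ext L η (k + 1) = false) (h2 : ∀ j, j + 1 = k → ext L η j = true) :
    energy L (flipAt L η k) = energy L η := by
  unfold energy
  apply Finset.sum_congr rfl
  intro j _
  rw [ext_flipAt L η k hk j, ext_flipAt L η k hk (j + 1)]
  by_cases hjk : j = k
  · subst hjk
    have : ¬ (j + 1 = j) := by omega
    simp [this, h1]
  · by_cases hjk1 : j + 1 = k
    · have := h2 j hjk1
      simp [hjk, hjk1, this]
    · simp [hjk, hjk1]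

lemma eps1_eq_of (L : ℕ) (η : Fin L → Bool) (m : ℤ)
    (hlb : ∀ i ∈ Finset.range (L + 1), -m ≤ pathS L η i)
    (hex : ∃ i ∈ Finset.range (L + 1), pathS L η i = -m) :
    eps1 L η = m := by
  unfold eps1
  have : (Finset.range (L + 1)).inf' ⟨0, Finset.mem_range.mpr (Nat.succ_pos L)⟩ (pathS L η) = -m := by
    apply le_antisymm
    · obtain ⟨i, hi, he⟩ := hex
      exact he ▸ Finset.inf'_le _ hi
    · exact Finset.le_inf' _ _ hlb
  rw [this]; ring

lemma of_eps1_eq (L : ℕ) (η : Fin L → Bool) (m : ℤ) (h : eps1 L η = m) :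
    (∀ i ∈ Finset.range (L + 1), -m ≤ pathS L η i)
      ∧ ∃ i ∈ Finset.range (L + 1), pathS L η i = -m := by
  unfold eps1 at h
  have h' : (Finset.range (L + 1)).inf' ⟨0, Finset.mem_range.mpr (Nat.succ_pos L)⟩ (pathS L η) = -m := by
    linarith
  constructor
  · intro i hi
    exact h' ▸ Finset.inf'_le _ hi
  · obtain ⟨i, hi, he⟩ := Finset.exists_mem_eq_inf' ⟨0, Finset.mem_range.mpr (Nat.succ_pos L)⟩ (pathS L η)
    exact ⟨i, hi, by rw [← he, h']⟩

def lastIdx (L : ℕ) (η : Fin L → Bool) (v : ℤ) : ℕ :=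
  let T := (Finset.range (L + 1)).filter fun i => pathS L η i = v
  if h : T.Nonempty then T.max' h else 0

def firstIdx (L : ℕ) (η : Fin L → Bool) (v : ℤ) : ℕ :=
  let T := (Finset.range (L + 1)).filter fun i => pathS L η i = v
  if h : T.Nonempty then T.min' h else 0

lemma lastIdx_spec (L : ℕ) (η : Fin L → Bool) (v : ℤ)
    (hex : ∃ i ∈ Finset.range (L + 1), pathS L η i = v) :
    lastIdx L η v ≤ L ∧ pathS L η (lastIdx L η v) = v
      ∧ ∀ i, i ≤ L → pathS L η i = v → i ≤ lastIdx L η v := by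
  classical
  set T := (Finset.range (L + 1)).filter fun i => pathS L η i = v with hT
  have hne : T.Nonempty := by
    obtain ⟨i, hi, he⟩ := hex
    exact ⟨i, Finset.mem_filter.mpr ⟨hi, he⟩⟩
  have hdef : lastIdx L η v = T.max' hne := by
    unfold lastIdx; rw [dif_pos hne]
  have hmem := T.max'_mem hne
  rw [← hdef] at hmem
  rw [hT, Finset.mem_filter, Finset.mem_range] at hmem
  refine ⟨by omega, hmem.2, ?_⟩
  intro i hi hv
  rw [hdef]
  exact Finset.le_max' T i (Finset.mem_filter.mpr ⟨Finset.mem_range.mpr (by omega), hv⟩)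

lemma firstIdx_spec (L : ℕ) (η : Fin L → Bool) (v : ℤ)
    (hex : ∃ i ∈ Finset.range (L + 1), pathS L η i = v) :
    firstIdx L η v ≤ L ∧ pathS L η (firstIdx L η v) = v
      ∧ ∀ i, i ≤ L → pathS L η i = v → firstIdx L η v ≤ i := by
  classical
  set T := (Finset.range (L + 1)).filter fun i => pathS L η i = v with hT
  have hne : T.Nonempty := by
    obtain ⟨i, hi, he⟩ := hex
    exact ⟨i, Finset.mem_filter.mpr ⟨hi, he⟩⟩
  have hdef : firstIdx L η v = T.min' hne := by
    unfold firstIdx; rw [dif_pos hne]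
  have hmem := T.min'_mem hne
  rw [← hdef] at hmem
  rw [hT, Finset.mem_filter, Finset.mem_range] at hmem
  refine ⟨by omega, hmem.2, ?_⟩
  intro i hi hv
  rw [hdef]
  exact Finset.min'_le T i (Finset.mem_filter.mpr ⟨Finset.mem_range.mpr (by omega), hv⟩)

def fwdF (L r : ℕ) (η : Fin L → Bool) : Fin L → Bool :=
  flipAt L η (lastIdx L η (-(r : ℤ)))

def bwdF (L r : ℕ) (ζ : Fin L → Bool) : Fin L → Bool :=
  flipAt L ζ (firstIdx L ζ (-((r : ℤ) + 1)) - 1)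

lemma fwd_all (L s r : ℕ) (hL : 2 ≤ L) (hs : s ≤ L / 2 - 1) (η : Fin L → Bool)
    (h1 : ones L η = s) (h2 : eps1 L η = (r : ℤ)) :
    ones L (fwdF L r η) = s + 1 ∧ eps1 L (fwdF L r η) = (r : ℤ) + 1
      ∧ energy L (fwdF L r η) = energy L η ∧ bwdF L r (fwdF L r η) = η := by
  obtain ⟨hmin, hex⟩ := of_eps1_eq L η (r : ℤ) h2
  set k := lastIdx L η (-(r : ℤ)) with hkdef
  obtain ⟨hkL, hkv, hkmax⟩ := lastIdx_spec L η (-(r : ℤ)) hex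
  rw [← hkdef] at hkL hkv hkmax
  -- k < L
  have hsL : 2 * s + 2 ≤ L := by omega
  have hkLt : k < L := by
    rcases Nat.lt_or_ge k L with h | h
    · exact h
    · exfalso
      have hkL' : k = L := by omega
      rw [hkL'] at hkv
      rw [pathS_last, h1] at hkv
      have : (0 : ℤ) ≤ (r : ℤ) := Int.natCast_nonneg r
      have : (2 : ℤ) ≤ (L : ℤ) - 2 * s := by
        push_cast; omega
      omega
  -- ext η k = false
  have hek : ext L η k = false := by
    cases hb : ext L η k with
    | false => rfl
    | true =>
      exfalso
      have hp := pathS_succ L η k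
      rw [hb, hkv] at hp
      have hmem : k + 1 ∈ Finset.range (L + 1) := Finset.mem_range.mpr (by omega)
      have := hmin (k + 1) hmem
      rw [hp] at this
      simp at this
      try omega
  -- S (k+1) = -r + 1
  have hSk1 : pathS L η (k + 1) = -(r : ℤ) + 1 := by
    have hp := pathS_succ L η k
    rw [hek, hkv] at hp
    simpa using hp
  -- ext η (k+1) = false
  have hek1 : ext L η (k + 1) = false := by
    cases hb : ext L η (k + 1) with
    | false => rfl
    | true =>
      exfalso
      have hlt : k + 1 < L := ext_true_lt L η (k + 1) hb
      have hp := pathS_succ L η (k + 1)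
      rw [hb, hSk1] at hp
      have hp' : pathS L η (k + 2) = -(r : ℤ) := by rw [hp]; norm_num
      have := hkmax (k + 2) (by omega) hp'
      omega
  -- predecessor is a one
  have hprev : ∀ j, j + 1 = k → ext L η j = true := by
    intro j hj
    cases hb : ext L η j with
    | true => rfl
    | false =>
      exfalso
      have hp := pathS_succ L η j
      rw [hb, hj, hkv] at hp
      have hmem : j ∈ Finset.range (L + 1) := Finset.mem_range.mpr (by omega)
      have := hmin j hmem
      simp at hp
      omega
  -- above-min strictly after k
  have hstrict : ∀ i, k < i → i ≤ L → -(r : ℤ) + 1 ≤ pathS L η i := by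
    intro i hki hiL
    have h1' := hmin i (Finset.mem_range.mpr (by omega))
    rcases eq_or_lt_of_le h1' with h | h
    · exfalso
      have := hkmax i hiL h.symm
      omega
    · omega
  have hfwd : fwdF L r η = flipAt L η k := rfl
  -- pathS of image
  have hpath' : ∀ i, pathS L (fwdF L r η) i = pathS L η i + (if k < i then -2 else 0) := by
    intro i
    rw [hfwd, pathS_flip L η k hkLt i, hek]
    simp
  refine ⟨?_, ?_, ?_, ?_⟩
  · rw [hfwd, ones_flip_false L η k hkLt hek, h1]
  · -- eps1 = r + 1
    apply eps1_eq_of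
    · intro i hi
      rw [hpath' i]
      rw [Finset.mem_range] at hi
      by_cases hki : k < i
      · have := hstrict i hki (by omega)
        simp [hki]; omega
      · have := hmin i (Finset.mem_range.mpr hi)
        simp [hki]; omega
    · refine ⟨k + 1, Finset.mem_range.mpr (by omega), ?_⟩
      rw [hpath' (k + 1), hSk1]
      simp
      try ring
  · rw [hfwd]
    exact energy_flip L η k hkLt hek1 hprev
  · -- bwd ∘ fwd = id
    have hex' : ∃ i ∈ Finset.range (L + 1), pathS L (fwdF L r η) i = -((r : ℤ) + 1) := by
      refine ⟨k + 1, Finset.mem_range.mpr (by omega), ?_⟩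
      rw [hpath' (k + 1), hSk1]; simp; try ring
    obtain ⟨hfL, hfv, hfmin⟩ := firstIdx_spec L (fwdF L r η) (-((r : ℤ) + 1)) hex'
    set k' := firstIdx L (fwdF L r η) (-((r : ℤ) + 1)) with hk'def
    have hk'eq : k' = k + 1 := by
      have hle : k' ≤ k + 1 := by
        apply hfmin (k + 1) (by omega)
        rw [hpath' (k + 1), hSk1]; simp; try ring
      have hge : k + 1 ≤ k' := by
        by_contra hcon
        have hik : k' ≤ k := by omega
        rw [hpath' k'] at hfv
        have : ¬ (k < k') := by omega
        rw [if_neg this] at hfv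
        have := hmin k' (Finset.mem_range.mpr (by omega))
        simp at hfv
        omega
      omega
    rw [bwdF, ← hk'def, hk'eq]
    simp only [Nat.add_sub_cancel]
    rw [hfwd, flipAt_flipAt]

lemma bwd_all (L s r : ℕ) (ζ : Fin L → Bool)
    (h1 : ones L ζ = s + 1) (h2 : eps1 L ζ = (r : ℤ) + 1) :
    ones L (bwdF L r ζ) = s ∧ eps1 L (bwdF L r ζ) = (r : ℤ)
      ∧ fwdF L r (bwdF L r ζ) = ζ := by
  obtain ⟨hmin, hex⟩ := of_eps1_eq L ζ ((r : ℤ) + 1) h2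
  obtain ⟨hkL, hkv, hkmin⟩ := firstIdx_spec L ζ (-((r : ℤ) + 1)) hex
  set k' := firstIdx L ζ (-((r : ℤ) + 1)) with hk'def
  have hk1 : 1 ≤ k' := by
    by_contra hcon
    have : k' = 0 := by omega
    rw [this, pathS_zero] at hkv
    omega
  set m := k' - 1 with hmdef
  have hm1 : m + 1 = k' := by omega
  have hmL : m < L := by omega
  -- strictly above -(r+1) before k'
  have hstrict : ∀ i, i < k' → -(r : ℤ) ≤ pathS L ζ i := by
    intro i hik
    have h1' := hmin i (Finset.mem_range.mpr (by omega))
    rcases eq_or_lt_of_le h1' with h | h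
    · exfalso
      have := hkmin i (by omega) h.symm
      omega
    · omega
  -- ext ζ m = true
  have hem : ext L ζ m = true := by
    cases hb : ext L ζ m with
    | true => rfl
    | false =>
      exfalso
      have hp := pathS_succ L ζ m
      rw [hb, hm1, hkv] at hp
      have := hstrict m (by omega)
      simp at hp
      omega
  -- S m = -r
  have hSm : pathS L ζ m = -(r : ℤ) := by
    have hp := pathS_succ L ζ m
    rw [hem, hm1, hkv] at hp
    simp at hp
    omega
  -- ext ζ (m+1) = false
  have hem1 : ext L ζ (m + 1) = false := by
    cases hb : ext L ζ (m + 1) with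
    | false => rfl
    | true =>
      exfalso
      have hlt : m + 1 < L := ext_true_lt L ζ (m + 1) hb
      have hp := pathS_succ L ζ (m + 1)
      rw [hb, hm1, hkv] at hp
      have := hmin (k' + 1) (Finset.mem_range.mpr (by omega))
      simp at hp
      omega
  -- predecessor of m is a one
  have hprev : ∀ j, j + 1 = m → ext L ζ j = true := by
    intro j hj
    cases hb : ext L ζ j with
    | true => rfl
    | false =>
      exfalso
      have hp := pathS_succ L ζ j
      rw [hb, hj, hSm] at hp
      simp at hp
      have : pathS L ζ j = -((r : ℤ) + 1) := by omega
      have := hkmin j (by omega) this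
      omega
  have hbwd : bwdF L r ζ = flipAt L ζ m := rfl
  have hpath' : ∀ i, pathS L (bwdF L r ζ) i = pathS L ζ i + (if m < i then 2 else 0) := by
    intro i
    rw [hbwd, pathS_flip L ζ m hmL i, hem]
    simp
  refine ⟨?_, ?_, ?_⟩
  · have := ones_flip_true L ζ m hmL hem
    rw [← hbwd] at this
    omega
  · apply eps1_eq_of
    · intro i hi
      rw [Finset.mem_range] at hi
      rw [hpath' i]
      by_cases hmi : m < i
      · have := hmin i (Finset.mem_range.mpr (by omega))
        simp [hmi]; omega
      · have := hstrict i (by omega)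
        simp [hmi]; omega
    · refine ⟨m, Finset.mem_range.mpr (by omega), ?_⟩
      rw [hpath' m, hSm]
      simp
  · -- fwd ∘ bwd = id
    have hex' : ∃ i ∈ Finset.range (L + 1), pathS L (bwdF L r ζ) i = -(r : ℤ) := by
      refine ⟨m, Finset.mem_range.mpr (by omega), ?_⟩
      rw [hpath' m, hSm]; simp
    obtain ⟨hfL, hfv, hfmax⟩ := lastIdx_spec L (bwdF L r ζ) (-(r : ℤ)) hex'
    set k'' := lastIdx L (bwdF L r ζ) (-(r : ℤ)) with hk''def
    have hk''eq : k'' = m := by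
      have hge : m ≤ k'' := by
        apply hfmax m (by omega)
        rw [hpath' m, hSm]; simp
      have hle : k'' ≤ m := by
        by_contra hcon
        have hmk : m < k'' := by omega
        rw [hpath' k'', if_pos hmk] at hfv
        have := hmin k'' (Finset.mem_range.mpr (by omega))
        omega
      omega
    rw [fwdF, ← hk''def, hk''eq, hbwd, flipAt_flipAt]

end Stmt9

/-- For `L ≥ 2`, `0 ≤ s ≤ ⌊L/2⌋ - 1` and `0 ≤ r ≤ s`, there is an energy
preserving bijection between `{η ∈ {0,1}^L : |η| = s, ε₁(η) = r}` and
`{η ∈ {0,1}^L : |η| = s+1, ε₁(η) = r+1}`. -/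

theorem stmt9 (L s r : ℕ) (hL : 2 ≤ L) (hs : s ≤ L / 2 - 1) (hr : r ≤ s) :
    ∃ e : {η : Fin L → Bool // ones L η = s ∧ eps1 L η = (r : ℤ)} ≃
        {η : Fin L → Bool // ones L η = s + 1 ∧ eps1 L η = (r : ℤ) + 1},
      ∀ η, energy L (e η).1 = energy L η.1 := by
  refine ⟨⟨fun η => ⟨Stmt9.fwdF L r η.1, ?_, ?_⟩,
           fun ζ => ⟨Stmt9.bwdF L r ζ.1, ?_, ?_⟩, ?_, ?_⟩, ?_⟩
  · exact (Stmt9.fwd_all L s r hL hs η.1 η.2.1 η.2.2).1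
  · exact (Stmt9.fwd_all L s r hL hs η.1 η.2.1 η.2.2).2.1
  · exact (Stmt9.bwd_all L s r ζ.1 ζ.2.1 ζ.2.2).1
  · exact (Stmt9.bwd_all L s r ζ.1 ζ.2.1 ζ.2.2).2.1
  · intro η
    exact Subtype.ext (Stmt9.fwd_all L s r hL hs η.1 η.2.1 η.2.2).2.2.2
  · intro ζ
    exact Subtype.ext (Stmt9.bwd_all L s r ζ.1 ζ.2.1 ζ.2.2).2.2
  · intro η
    exact (Stmt9.fwd_all L s r hL hs η.1 η.2.1 η.2.2).2.2.1
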